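/- There exist binary words x such that J(x) > J(1x1), where J is the maximum fold score in the 2D rectangular lattice. In particular, the word x = (011)³ 1^{10} 0110 110 satisfies J(x) = Z(x)+1 = 9 while J(1x1) ≤ Z(x) = 8. -/
import Mathlib


/-- L¹ distance on ℤ². -/
def d2 (p q : ℤ × ℤ) : ℕ := (p.1 - q.1).natAbs + (p.2 - q.2).natAbs

/-- Adjacency in the 2D rectangular lattice. -/
def adj2 (p q : ℤ × ℤ) : Prop := d2 p q = 1

/-- Adjacency in the hexagonal (3-regular, brick-wall) lattice. -/
def hexAdj (p q : ℤ × ℤ) : Prop :=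
  (p.2 = q.2 ∧ (p.1 - q.1).natAbs = 1) ∨
  (p.1 = q.1 ∧ ((q.2 = p.2 + 1 ∧ (p.1 + p.2) % 2 = 0) ∨ (p.2 = q.2 + 1 ∧ (q.1 + q.2) % 2 = 0)))

/-- A fold (self-avoiding walk) of a binary word `w` on a lattice with adjacency `A`:
letters `false` = hydrophobic (0), `true` = polar (1). -/
def IsFold (A : ℤ × ℤ → ℤ × ℤ → Prop) (w : List Bool) (F : Fin w.length → ℤ × ℤ) : Prop :=
  Function.Injective F ∧
    ∀ (i : ℕ) (h : i + 1 < w.length), A (F ⟨i, by omega⟩) (F ⟨i + 1, h⟩)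

/-- The score of a fold: the number of (unordered) pairs of non-consecutive positions,
both labeled 0, whose images are adjacent. -/
noncomputable def score (A : ℤ × ℤ → ℤ × ℤ → Prop) (w : List Bool) (F : Fin w.length → ℤ × ℤ) : ℕ :=
  Set.ncard {p : Fin w.length × Fin w.length |
    p.1.1 + 2 ≤ p.2.1 ∧ w.get p.1 = false ∧ w.get p.2 = false ∧ A (F p.1) (F p.2)}

/-- The optimal score over all folds of `w`. -/
noncomputable def J (A : ℤ × ℤ → ℤ × ℤ → Prop) (w : List Bool) : ℕ :=
  sSup {s | ∃ F, IsFold A w F ∧ score A w F = s}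


/-- Nonmonotonicity of optimal folding in the 2D rectangular lattice: there are words `x`
with `J(x) > J(1x1)`; in particular `x = (011)^3 1^10 0110 110` satisfies
`J(x) = Z(x) + 1` while `J(1x1) ≤ Z(x)`. -/
instance adj2.decRel : DecidableRel adj2 := fun p q => Nat.decEq (d2 p q) 1
lemma adj2_symm {p q : ℤ × ℤ} (h : adj2 p q) : adj2 q p := by
  unfold adj2 d2 at *; omega
lemma adj2_parity {p q : ℤ × ℤ} (h : adj2 p q) : (p.1 + p.2 + 1) % 2 = (q.1 + q.2) % 2 := by
  unfold adj2 d2 at h; omega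
def nbrs (q : ℤ × ℤ) : Finset (ℤ × ℤ) := {(q.1+1, q.2), (q.1-1, q.2), (q.1, q.2+1), (q.1, q.2-1)}
lemma mem_nbrs {p q : ℤ × ℤ} (h : adj2 p q) : q ∈ nbrs p := by
  have h1 : (p.1 - q.1).natAbs + (p.2 - q.2).natAbs = 1 := h
  obtain ⟨a, b⟩ := p; obtain ⟨c, d⟩ := q
  simp only [nbrs, Finset.mem_insert, Finset.mem_singleton, Prod.mk.injEq] at *
  omega
lemma card_nbrs (q : ℤ × ℤ) : (nbrs q).card ≤ 4 := by
  have h1 := Finset.card_insert_le (q.1+1, q.2) ({(q.1-1,q.2),(q.1,q.2+1),(q.1,q.2-1)} : Finset (ℤ×ℤ))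
  have h2 := Finset.card_insert_le (q.1-1, q.2) ({(q.1,q.2+1),(q.1,q.2-1)} : Finset (ℤ×ℤ))
  have h3 := Finset.card_insert_le (q.1, q.2+1) ({(q.1,q.2-1)} : Finset (ℤ×ℤ))
  have h4 : ({(q.1,q.2-1)} : Finset (ℤ×ℤ)).card = 1 := rfl
  unfold nbrs; omega
def foldPairs (w : List Bool) (F : Fin w.length → ℤ × ℤ) : Finset (Fin w.length × Fin w.length) :=
  Finset.univ.filter (fun p =>
    p.1.1 + 2 ≤ p.2.1 ∧ w.get p.1 = false ∧ w.get p.2 = false ∧ adj2 (F p.1) (F p.2))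
lemma score_eq (w : List Bool) (F : Fin w.length → ℤ × ℤ) :
    score adj2 w F = (foldPairs w F).card := by
  unfold score
  have h : {p : Fin w.length × Fin w.length |
      p.1.1 + 2 ≤ p.2.1 ∧ w.get p.1 = false ∧ w.get p.2 = false ∧ adj2 (F p.1) (F p.2)} =
      ↑(foldPairs w F) := by
    ext p; simp [foldPairs]
  rw [h, Set.ncard_coe_finset]
lemma fold_step {w : List Bool} {F : Fin w.length → ℤ × ℤ} (hF : IsFold adj2 w F)
    {i j : Fin w.length} (hij : i.1 + 1 = j.1) : adj2 (F i) (F j) := by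
  have hj2 := j.2
  have hlt : i.1 + 1 < w.length := by omega
  have h : adj2 (F i) (F ⟨i.1 + 1, hlt⟩) := hF.2 i.1 hlt
  have e : (⟨i.1 + 1, hlt⟩ : Fin w.length) = j := Fin.ext hij
  rwa [e] at h
lemma fold_parity {w : List Bool} {F : Fin w.length → ℤ × ℤ} (hF : IsFold adj2 w F)
    (i j : Fin w.length) (h : adj2 (F i) (F j)) : (i.1 + j.1) % 2 = 1 := by
  have hn : 0 < w.length := i.pos
  have key : ∀ k, ∀ hk : k < w.length,
      ((F ⟨k, hk⟩).1 + (F ⟨k, hk⟩).2 + (k : ℤ)) % 2 = ((F ⟨0, hn⟩).1 + (F ⟨0, hn⟩).2) % 2 := by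
    intro k
    induction k with
    | zero => intro hk; simp
    | succ m ih =>
      intro hk
      have hm : m < w.length := by omega
      have hadj : adj2 (F ⟨m, hm⟩) (F ⟨m + 1, hk⟩) := hF.2 m hk
      have hp := adj2_parity hadj
      have hih := ih hm
      push_cast
      omega
  have h1 := key i.1 i.2
  have h2 := key j.1 j.2
  have hp : adj2 (F ⟨i.1, i.2⟩) (F ⟨j.1, j.2⟩) := h
  have hp2 := adj2_parity hp
  omega

lemma score_le_sum (w : List Bool) (F : Fin w.length → ℤ × ℤ) (hF : IsFold adj2 w F) :
    score adj2 w F ≤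
      ∑ i ∈ Finset.univ.filter (fun i : Fin w.length => w.get i = false ∧ i.1 % 2 = 0),
        (if 0 < i.1 ∧ i.1 + 1 < w.length then 2 else 3) := by
  rw [score_eq]
  have Fne : ∀ u v : Fin w.length, u.1 ≠ v.1 → F u ≠ F v := by
    intro u v h e
    exact h (congrArg Fin.val (hF.1 e))
  have hg : ∀ p ∈ foldPairs w F, (if p.1.1 % 2 = 0 then p.1 else p.2) ∈
      Finset.univ.filter (fun i : Fin w.length => w.get i = false ∧ i.1 % 2 = 0) := by
    intro p hp
    simp only [foldPairs, Finset.mem_filter, Finset.mem_univ, true_and] at hp ⊢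
    obtain ⟨hle, h1, h2, hadj⟩ := hp
    have hpar := fold_parity hF p.1 p.2 hadj
    by_cases h : p.1.1 % 2 = 0
    · rw [if_pos h]; exact ⟨h1, h⟩
    · rw [if_neg h]; exact ⟨h2, by omega⟩
  rw [Finset.card_eq_sum_card_fiberwise hg]
  apply Finset.sum_le_sum
  intro i hi
  have hstruct : ∀ p ∈ (foldPairs w F).filter
      (fun p => (if p.1.1 % 2 = 0 then p.1 else p.2) = i),
      (p.1 = i ∧ i.1 + 2 ≤ p.2.1 ∧ adj2 (F i) (F p.2)) ∨
      (p.2 = i ∧ p.1.1 + 2 ≤ i.1 ∧ adj2 (F i) (F p.1)) := by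
    intro p hp
    simp only [foldPairs, Finset.mem_filter, Finset.mem_univ, true_and] at hp
    obtain ⟨⟨hle, h1, h2, hadj⟩, heq⟩ := hp
    by_cases h : p.1.1 % 2 = 0
    · rw [if_pos h] at heq
      exact Or.inl ⟨heq, heq ▸ hle, heq ▸ hadj⟩
    · rw [if_neg h] at heq
      exact Or.inr ⟨heq, heq ▸ hle, adj2_symm (heq ▸ hadj)⟩
  have key : ∀ t : Finset (ℤ × ℤ),
      (∀ j : Fin w.length, (i.1 + 2 ≤ j.1 ∨ j.1 + 2 ≤ i.1) → adj2 (F i) (F j) → F j ∈ t) →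
      ((foldPairs w F).filter (fun p => (if p.1.1 % 2 = 0 then p.1 else p.2) = i)).card ≤
        t.card := by
    intro t ht
    apply Finset.card_le_card_of_injOn (fun p => F (if p.1 = i then p.2 else p.1))
    · intro p hp
      rcases hstruct p hp with ⟨h1, h2, h3⟩ | ⟨h1, h2, h3⟩
      · simp only [if_pos h1]
        exact ht p.2 (Or.inl h2) h3
      · have hne : p.1 ≠ i := by
          intro e; rw [e] at h2; omega
        simp only [if_neg hne]
        exact ht p.1 (Or.inr h2) h3
    · intro p hp q hq hfq
      simp only at hfq
      rcases hstruct p hp with ⟨hp1, hp2, _⟩ | ⟨hp1, hp2, _⟩ <;>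
        rcases hstruct q hq with ⟨hq1, hq2, _⟩ | ⟨hq1, hq2, _⟩
      · rw [if_pos hp1, if_pos hq1] at hfq
        have := hF.1 hfq
        exact Prod.ext (hp1.trans hq1.symm) this
      · have hne : q.1 ≠ i := by intro e; rw [e] at hq2; omega
        rw [if_pos hp1, if_neg hne] at hfq
        have := hF.1 hfq
        have : p.2.1 = q.1.1 := congrArg Fin.val this
        omega
      · have hne : p.1 ≠ i := by intro e; rw [e] at hp2; omega
        rw [if_neg hne, if_pos hq1] at hfq
        have := hF.1 hfq
        have : p.1.1 = q.2.1 := congrArg Fin.val this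
        omega
      · have hnep : p.1 ≠ i := by intro e; rw [e] at hp2; omega
        have hneq : q.1 ≠ i := by intro e; rw [e] at hq2; omega
        rw [if_neg hnep, if_neg hneq] at hfq
        have := hF.1 hfq
        exact Prod.ext this (hp1.trans hq1.symm)
  by_cases hA : 0 < i.1 ∧ i.1 + 1 < w.length
  · rw [if_pos hA]
    set im1 : Fin w.length := ⟨i.1 - 1, by omega⟩ with him1
    set ip1 : Fin w.length := ⟨i.1 + 1, hA.2⟩ with hip1
    have hadjm : adj2 (F im1) (F i) := fold_step hF (by simp [him1]; omega)
    have hadjp : adj2 (F i) (F ip1) := fold_step hF rfl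
    have hNm : F im1 ∈ nbrs (F i) := mem_nbrs (adj2_symm hadjm)
    have hNp : F ip1 ∈ nbrs (F i) := mem_nbrs hadjp
    have hne : F ip1 ≠ F im1 := Fne _ _ (by simp [hip1, him1]; omega)
    refine le_trans (key (((nbrs (F i)).erase (F im1)).erase (F ip1)) ?_) ?_
    · intro j hj hadj
      refine Finset.mem_erase.mpr ⟨Fne j ip1 (by simp [hip1]; omega),
        Finset.mem_erase.mpr ⟨Fne j im1 (by simp [him1]; omega), mem_nbrs hadj⟩⟩
    · rw [Finset.card_erase_of_mem (Finset.mem_erase.mpr ⟨hne, hNp⟩),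
        Finset.card_erase_of_mem hNm]
      have := card_nbrs (F i)
      omega
  · rw [if_neg hA]
    by_cases hB : i.1 + 1 < w.length
    · -- i.1 = 0
      have hi0 : i.1 = 0 := by omega
      set ip1 : Fin w.length := ⟨i.1 + 1, hB⟩ with hip1
      have hadjp : adj2 (F i) (F ip1) := fold_step hF rfl
      have hNp : F ip1 ∈ nbrs (F i) := mem_nbrs hadjp
      refine le_trans (key ((nbrs (F i)).erase (F ip1)) ?_) ?_
      · intro j hj hadj
        refine Finset.mem_erase.mpr ⟨Fne j ip1 (by simp [hip1]; omega), mem_nbrs hadj⟩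
      · rw [Finset.card_erase_of_mem hNp]
        have := card_nbrs (F i)
        omega
    · by_cases hC : 0 < i.1
      · set im1 : Fin w.length := ⟨i.1 - 1, by omega⟩ with him1
        have hadjm : adj2 (F im1) (F i) := fold_step hF (by simp [him1]; omega)
        have hNm : F im1 ∈ nbrs (F i) := mem_nbrs (adj2_symm hadjm)
        refine le_trans (key ((nbrs (F i)).erase (F im1)) ?_) ?_
        · intro j hj hadj
          have hj2 := j.2
          refine Finset.mem_erase.mpr ⟨Fne j im1 (by simp [him1]; omega), mem_nbrs hadj⟩
        · rw [Finset.card_erase_of_mem hNm]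
          have := card_nbrs (F i)
          omega
      · -- w.length = 1 essentially
        have : ((foldPairs w F).filter
            (fun p => (if p.1.1 % 2 = 0 then p.1 else p.2) = i)) = ∅ := by
          apply Finset.eq_empty_of_forall_notMem
          intro p hp
          rcases hstruct p hp with ⟨_, h2, _⟩ | ⟨_, h2, _⟩
          · have := p.2.2; omega
          · omega
        rw [this]
        simp

def lineFold (w : List Bool) : Fin w.length → ℤ × ℤ := fun i => ((i.1 : ℤ), 0)

lemma lineFold_isFold (w : List Bool) : IsFold adj2 w (lineFold w) := by
  constructor
  · intro u v e
    have : (u.1 : ℤ) = v.1 := congrArg Prod.fst e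
    exact Fin.ext (by exact_mod_cast this)
  · intro i h
    show d2 ((i : ℤ), 0) (((i + 1 : ℕ) : ℤ), 0) = 1
    unfold d2
    push_cast
    omega

lemma J_le_of {w : List Bool} {B : ℕ}
    (h : ∀ F, IsFold adj2 w F → score adj2 w F ≤ B) : J adj2 w ≤ B := by
  apply csSup_le
  · exact ⟨score adj2 w (lineFold w), lineFold w, lineFold_isFold w, rfl⟩
  · rintro s ⟨F, hF, rfl⟩
    exact h F hF

lemma J_ge_of {w : List Bool} {B s : ℕ} (F : Fin w.length → ℤ × ℤ)
    (hF : IsFold adj2 w F) (hs : score adj2 w F = s)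
    (h : ∀ F, IsFold adj2 w F → score adj2 w F ≤ B) : s ≤ J adj2 w := by
  apply le_csSup
  · exact ⟨B, by rintro t ⟨G, hG, rfl⟩; exact h G hG⟩
  · exact ⟨F, hF, hs⟩

def xw : List Bool :=
  [false, true, true, false, true, true, false, true, true] ++
    List.replicate 10 true ++ [false, true, true, false] ++ [true, true, false]

def yw : List Bool := [true] ++ xw ++ [true]

lemma xw_bound : ∀ F, IsFold adj2 xw F → score adj2 xw F ≤ 7 := by
  intro F hF
  have h := score_le_sum xw F hF
  have e : (∑ i ∈ Finset.univ.filter (fun i : Fin xw.length => xw.get i = false ∧ i.1 % 2 = 0),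
      (if 0 < i.1 ∧ i.1 + 1 < xw.length then 2 else 3)) = 7 := by decide
  omega

lemma yw_bound : ∀ F, IsFold adj2 yw F → score adj2 yw F ≤ 6 := by
  intro F hF
  have h := score_le_sum yw F hF
  have e : (∑ i ∈ Finset.univ.filter (fun i : Fin yw.length => yw.get i = false ∧ i.1 % 2 = 0),
      (if 0 < i.1 ∧ i.1 + 1 < yw.length then 2 else 3)) = 6 := by decide
  omega

def Fx : Fin xw.length → ℤ × ℤ :=
  ![(0,1),(0,2),(1,2),(1,1),(2,1),(2,0),(1,0),(1,-1),(2,-1),(3,-1),(3,0),(3,1),(3,2),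
    (2,2),(2,3),(1,3),(0,3),(-1,3),(-1,2),(-1,1),(-2,1),(-2,0),(-1,0),(-1,-1),(0,-1),(0,0)]

lemma Fx_isFold : IsFold adj2 xw Fx := by
  constructor
  · decide
  · intro i h
    have hl : xw.length = 26 := rfl
    have H : ∀ j : Fin 25, adj2 (Fx ⟨j.1, Nat.lt_of_lt_of_le j.2 (by decide)⟩)
        (Fx ⟨j.1 + 1, Nat.succ_lt_succ j.2⟩) := by decide
    exact H ⟨i, by omega⟩

lemma Fx_score : score adj2 xw Fx = 7 := by
  rw [score_eq]
  decide

lemma J_xw : J adj2 xw = 7 :=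
  le_antisymm (J_le_of xw_bound) (J_ge_of Fx Fx_isFold Fx_score xw_bound)

lemma J_yw : J adj2 yw ≤ 6 := J_le_of yw_bound


theorem stmt10 :
    let x : List Bool :=
      [false, true, true, false, true, true, false, true, true] ++
        List.replicate 10 true ++ [false, true, true, false] ++ [true, true, false]
    (∃ y : List Bool, J adj2 ([true] ++ y ++ [true]) < J adj2 y) ∧
      J adj2 x = x.count false + 1 ∧
      J adj2 ([true] ++ x ++ [true]) ≤ x.count false ∧
      J adj2 ([true] ++ x ++ [true]) < J adj2 x := by
  intro x
  have h7 : J adj2 x = 7 := J_xw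
  have h6 : J adj2 ([true] ++ x ++ [true]) ≤ 6 := J_yw
  have hc : x.count false = 6 := by decide
  exact ⟨⟨x, by omega⟩, by omega, by omega, by omega⟩
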